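/- arXiv:2004.09940 — 3 statements merged into one kernel-verified Lean document; each statement's English description precedes it below -/
import Mathlib

section
/- For every δ with 0 < δ < g/4, there exist positive integers N, W, V, a real number η with 0 < η ≤ δ, and an increasing real sequence (t_n)_{0≤n≤N} with t_0 = 0 such that: (1) t_N - t_0 = W; (2) (4/g)η + (t_N - t_{N-1}) - (t_1 - t_0) = V; (3) (g/4)(t_{n+1} - 2t_n + t_{n-1}) = δ for all 1 ≤ n ≤ N-1. -/
theorem sequence_construction (g δ : ℝ) (hg : 0 < g) (hδ : 0 < δ) (hδg : δ < g / 4) :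
    ∃ (N W V : ℕ) (η : ℝ) (t : ℕ → ℝ),
      0 < N ∧ 0 < W ∧ 0 < V ∧ 0 < η ∧ η ≤ δ ∧
      (∀ n : ℕ, n < N → t n < t (n + 1)) ∧
      t 0 = 0 ∧
      t N - t 0 = (W : ℝ) ∧
      4 / g * η + (t N - t (N - 1)) - (t 1 - t 0) = (V : ℝ) ∧
      (∀ n : ℕ, 1 ≤ n → n ≤ N - 1 →
        g / 4 * (t (n + 1) - 2 * t n + t (n - 1)) = δ) := by
  set d : ℝ := 4 * δ / g with hd
  have hd0 : 0 < d := by positivity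
  set x : ℝ := g / (4 * δ) with hx
  have hx0 : 0 ≤ x := by positivity
  set N : ℕ := ⌈x⌉₊ with hN
  have hx1 : 1 < x := by
    rw [hx, lt_div_iff₀ (by positivity)]
    linarith [hδg]
  have hN1 : 1 ≤ N := Nat.one_le_iff_ne_zero.mpr (by
    simp [hN, Nat.ceil_eq_zero, not_le]; linarith)
  have hNx : x ≤ (N : ℝ) := Nat.le_ceil x
  have hNx' : (N : ℝ) - 1 < x := by
    have := Nat.ceil_lt_add_one hx0
    rw [← hN] at this; linarith
  set s : ℝ := d * N * (N - 1) / 2 with hs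
  have hs0 : 0 ≤ s := by
    have h1 : (1:ℝ) ≤ (N : ℝ) := by exact_mod_cast hN1
    have h2 := mul_nonneg (mul_nonneg hd0.le (by linarith : (0:ℝ) ≤ (N:ℝ))) (by linarith : (0:ℝ) ≤ (N:ℝ) - 1)
    rw [hs]; nlinarith [h2]
  set W : ℕ := ⌊s⌋₊ + 1 with hW
  have hsW : s < (W : ℝ) := by
    rw [hW]; push_cast; exact Nat.lt_floor_add_one s
  set c : ℝ := ((W : ℝ) - s) / N with hc
  have hNpos : (0:ℝ) < N := by exact_mod_cast hN1
  have hc0 : 0 < c := by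
    rw [hc]; exact div_pos (by linarith) hNpos
  have hg' : g ≠ 0 := hg.ne'
  set η : ℝ := g / 4 - ((N : ℝ) - 1) * δ with hη
  refine ⟨N, W, 1, η, fun n => c * n + d * n * (n - 1) / 2, hN1, Nat.succ_pos _,
    Nat.one_pos, ?_, ?_, ?_, by norm_num, ?_, ?_, ?_⟩
  · -- 0 < η
    rw [hη]
    have : ((N : ℝ) - 1) * δ < x * δ := by
      apply mul_lt_mul_of_pos_right hNx' hδ
    have hxδ : x * δ = g / 4 := by
      rw [hx]; field_simp
    linarith
  · -- η ≤ δ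
    rw [hη]
    have : x * δ ≤ (N : ℝ) * δ := mul_le_mul_of_nonneg_right hNx hδ.le
    have hxδ : x * δ = g / 4 := by
      rw [hx]; field_simp
    nlinarith
  · -- increasing
    intro n _
    have hn0 : (0:ℝ) ≤ (n : ℝ) := Nat.cast_nonneg n
    push_cast
    nlinarith
  · -- t N - t 0 = W
    have key : c * N + s = W := by
      rw [hc]; field_simp; ring
    push_cast at key ⊢
    linarith
  · -- condition (2)
    have hcast : ((N - 1 : ℕ) : ℝ) = (N : ℝ) - 1 := by
      have := Nat.cast_sub hN1 (R := ℝ); simpa using this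
    beta_reduce
    rw [hcast]
    push_cast
    rw [hη, hd]
    field_simp
    ring
  · -- condition (3)
    intro n hn1 _
    have hcast : ((n - 1 : ℕ) : ℝ) = (n : ℝ) - 1 := by
      have := Nat.cast_sub hn1 (R := ℝ); simpa using this
    beta_reduce
    rw [hcast]
    push_cast
    have hdd : g / 4 * d = δ := by rw [hd]; field_simp
    linear_combination hdd
end

section
/- Let φ: ℝ → ℝ be 1-periodic and let (t_n, v_n) be the forward orbit of GS with t_0 = t_0*, v_0 = g(t_1* - t_0*)/2 where t_0* < t_1*. Suppose there exist positive integers N, W, V such that N(t_1* - t_0*) + (4/g)∑_{k=1}^{N-1}(N-k)φ(t_k) = W and (4/g)∑_{k=0}^{N-1} φ(t_k) = V. Then for every n ≥ 0 there exists σ_n ∈ ℕ with t_{n+N} = t_n + σ_n, and v_{n+N} = v_n + (g/2)V. -/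
theorem GS_cycle (g : ℝ) (hg : 0 < g) (φ : ℝ → ℝ) (hper : Function.Periodic φ 1)
    (t0s t1s : ℝ) (h01 : t0s < t1s) (t v : ℕ → ℝ)
    (ht0 : t 0 = t0s) (hv0 : v 0 = g * (t1s - t0s) / 2)
    (ht : ∀ n : ℕ, t (n + 1) = t n + 2 / g * v n)
    (hv : ∀ n : ℕ, v (n + 1) = v n + 2 * φ (t (n + 1)))
    (N W V : ℕ) (hN : 0 < N) (hW : 0 < W) (hV : 0 < V)
    (h1 : (N : ℝ) * (t1s - t0s) + 4 / g * ∑ k ∈ Finset.Icc 1 (N - 1), ((N : ℝ) - k) * φ (t k) = (W : ℝ))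
    (h2 : 4 / g * ∑ k ∈ Finset.range N, φ (t k) = (V : ℝ)) :
    ∀ n : ℕ, (∃ σ : ℕ, t (n + N) = t n + (σ : ℝ)) ∧
      v (n + N) = v n + g / 2 * V := by
  have hg' : g ≠ 0 := ne_of_gt hg
  have hperN : ∀ (x : ℝ) (m : ℕ), φ (x + m) = φ x := by
    intro x m
    simpa using (hper.nat_mul m) x
  -- v as partial sums
  have hvj : ∀ j : ℕ, v j = v 0 + 2 * ∑ k ∈ Finset.Icc 1 j, φ (t k) := by
    intro j
    induction j with
    | zero => simp
    | succ j ih =>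
      rw [hv j, ih, Finset.sum_Icc_succ_top (Nat.succ_le_succ (Nat.zero_le j))]
      ring
  have htM : ∀ M : ℕ, t M = t 0 + 2 / g * ∑ j ∈ Finset.range M, v j := by
    intro M
    induction M with
    | zero => simp
    | succ M ih =>
      rw [ht M, ih, Finset.sum_range_succ]
      ring
  -- double sum identity
  have hdouble : ∀ M : ℕ, ∑ j ∈ Finset.range (M + 1), ∑ k ∈ Finset.Icc 1 j, φ (t k)
      = ∑ k ∈ Finset.Icc 1 M, (((M : ℝ) + 1) - k) * φ (t k) := by
    intro M
    induction M with
    | zero => simp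
    | succ M ih =>
      have h1M : 1 ≤ M + 1 := Nat.succ_le_succ (Nat.zero_le M)
      rw [Finset.sum_range_succ, ih, Finset.sum_Icc_succ_top h1M,
        Finset.sum_Icc_succ_top h1M, ← add_assoc, ← Finset.sum_add_distrib,
        Finset.sum_congr rfl (fun k _ => by push_cast; ring :
          ∀ k ∈ Finset.Icc 1 M, ((M : ℝ) + 1 - k) * φ (t k) + φ (t k)
            = (((M + 1 : ℕ) : ℝ) + 1 - k) * φ (t k))]
      push_cast
      ring
  -- base case: t N = t 0 + W
  have hsumv : ∑ j ∈ Finset.range N, v j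
      = N * v 0 + 2 * ∑ k ∈ Finset.Icc 1 (N - 1), ((N : ℝ) - k) * φ (t k) := by
    have hNe : N - 1 + 1 = N := Nat.succ_pred_eq_of_pos hN
    calc ∑ j ∈ Finset.range N, v j
        = ∑ j ∈ Finset.range N, (v 0 + 2 * ∑ k ∈ Finset.Icc 1 j, φ (t k)) :=
          Finset.sum_congr rfl (fun j _ => hvj j)
      _ = N * v 0 + 2 * ∑ j ∈ Finset.range N, ∑ k ∈ Finset.Icc 1 j, φ (t k) := by
          rw [Finset.sum_add_distrib, Finset.sum_const, Finset.card_range,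
            ← Finset.mul_sum]
          push_cast; ring
      _ = N * v 0 + 2 * ∑ k ∈ Finset.Icc 1 (N - 1), ((N : ℝ) - k) * φ (t k) := by
          rw [← hNe, hdouble (N - 1)]
          have : (((N - 1 : ℕ) : ℝ) + 1) = ((N - 1 + 1 : ℕ) : ℝ) := by push_cast; ring
          rw [this, hNe]
  have htN : t N = t 0 + (W : ℝ) := by
    rw [htM N, hsumv, hv0]
    rw [← h1]
    field_simp
    ring
  -- base case: v N = v 0 + g/2 * V
  have hIccrange : ∑ k ∈ Finset.Icc 1 N, φ (t k) = ∑ k ∈ Finset.range N, φ (t k) := by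
    have hreidx : ∀ m : ℕ, ∑ k ∈ Finset.Icc 1 m, φ (t k)
        = ∑ i ∈ Finset.range m, φ (t (i + 1)) := by
      intro m
      induction m with
      | zero => simp
      | succ m ihm =>
        rw [Finset.sum_Icc_succ_top (Nat.succ_le_succ (Nat.zero_le m)),
          Finset.sum_range_succ, ihm]
    have e1 : ∑ k ∈ Finset.range (N + 1), φ (t k)
        = φ (t 0) + ∑ k ∈ Finset.Icc 1 N, φ (t k) := by
      rw [Finset.sum_range_succ', hreidx]; ring
    have e2 : ∑ k ∈ Finset.range (N + 1), φ (t k)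
        = ∑ k ∈ Finset.range N, φ (t k) + φ (t N) := Finset.sum_range_succ _ _
    have e3 : φ (t N) = φ (t 0) := by rw [htN]; exact hperN (t 0) W
    rw [e3] at e2
    linarith [e1, e2]
  have hVsum : ∑ k ∈ Finset.range N, φ (t k) = g / 4 * V := by
    field_simp at h2
    linarith
  have hvN : v N = v 0 + g / 2 * V := by
    rw [hvj N, hIccrange, hVsum]; ring
  -- induction
  intro n
  induction n with
  | zero =>
    refine ⟨⟨W, ?_⟩, ?_⟩ <;> simpa using by first | exact htN | exact hvN
  | succ n ihn =>
    obtain ⟨⟨σ, hσ⟩, hvn⟩ := ihn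
    have ht' : t (n + 1 + N) = t (n + 1) + ((σ + V : ℕ) : ℝ) := by
      have e : n + 1 + N = (n + N) + 1 := by ring
      rw [e, ht (n + N), hσ, hvn, ht n]
      push_cast
      field_simp
      ring
    refine ⟨⟨σ + V, ht'⟩, ?_⟩
    have e : n + 1 + N = (n + N) + 1 := by ring
    rw [e] at ht' ⊢
    rw [hv (n + N), ht', hperN (t (n + 1)) (σ + V), hvn, hv n]
    ring
end

section
/- For every δ with 0 < δ < g/4, there exists a 1-periodic function f ∈ C¹(ℝ) with sup|f'| ≤ δ, an initial condition (t_0*, v_0*), and a positive integer V, such that the orbit (t_n*, v_n*) of the bouncing ball map P_f satisfies t_{n+N}* = t_n* + σ_n with σ_n ∈ ℕ and v_{n+N}* = v_n* + (g/2)V for all n ≥ 0, for some positive integer N; in particular the orbit has unbounded velocity. -/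
open Real

set_option maxHeartbeats 1000000 in
theorem main_theorem (g δ : ℝ) (hg : 0 < g) (hδ : 0 < δ) (hδg : δ < g / 4) :
    ∃ f : ℝ → ℝ, ContDiff ℝ 1 f ∧ Function.Periodic f 1 ∧
      (∀ x : ℝ, |deriv f x| ≤ δ) ∧
      ∃ (t v : ℕ → ℝ) (N V : ℕ), 0 < N ∧ 0 < V ∧
        (∀ n : ℕ, t n < t (n + 1)) ∧
        (∀ n : ℕ, t (n + 1) = t n + 2 / g * v n -
          2 / g * ((f (t (n + 1)) - f (t n)) / (t (n + 1) - t n))) ∧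
        (∀ n : ℕ, v (n + 1) = v n + 2 * deriv f (t (n + 1)) -
          2 * ((f (t (n + 1)) - f (t n)) / (t (n + 1) - t n))) ∧
        (∀ n : ℕ, ∃ σ : ℕ, t (n + N) = t n + (σ : ℝ)) ∧
        (∀ n : ℕ, v (n + N) = v n + g / 2 * V) ∧
        ¬ BddAbove (Set.range v) := by
  obtain ⟨K, hK⟩ := exists_nat_gt (g / (4 * δ))
  set M : ℕ := 2 * K + 1 with hMdef
  have hπ : (0:ℝ) < π := Real.pi_pos
  have hMpos : (0:ℝ) < (M : ℝ) := by positivity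
  have hMne : (M : ℝ) ≠ 0 := ne_of_gt hMpos
  have hKM : g / (4 * δ) < (M : ℝ) := by
    have : (K : ℝ) ≤ (M : ℝ) := by exact_mod_cast Nat.le_of_lt (by omega)
    linarith
  -- g / (4 M) < δ
  have hgM : g / (4 * M) < δ := by
    rw [div_lt_iff₀ (by positivity)]
    rw [div_lt_iff₀ (by positivity)] at hKM
    linarith
  set ε : ℝ := g / (8 * π * (M : ℝ) ^ 2) with hε
  set c : ℝ := 2 * π * (M : ℝ) with hc
  have hcpos : 0 < c := by positivity
  have hεpos : 0 < ε := by positivity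
  have hεc : ε * c = g / (4 * M) := by
    rw [hε, hc]; field_simp; ring
  refine ⟨fun x => ε * Real.sin (c * x), ?_, ?_, ?_, ?_⟩
  · exact contDiff_const.mul ((Real.contDiff_sin.of_le le_top).comp
      (contDiff_const.mul contDiff_id))
  · intro x
    simp only
    have : c * (x + 1) = c * x + (M : ℤ) * (2 * π) := by
      push_cast [hc]; ring
    rw [this, Real.sin_add_int_mul_two_pi]
  all_goals
    have hd : ∀ x : ℝ, HasDerivAt (fun y => ε * Real.sin (c * y))
        (ε * (Real.cos (c * x) * (c * 1))) x := fun x =>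
      ((Real.hasDerivAt_sin (c * x)).comp x ((hasDerivAt_id x).const_mul c)).const_mul ε
    have hderiv : ∀ x : ℝ, deriv (fun y => ε * Real.sin (c * y)) x
        = ε * c * Real.cos (c * x) := by
      intro x; rw [(hd x).deriv]; ring
  · intro x
    rw [hderiv x]
    have h1 : |ε * c * Real.cos (c * x)| ≤ ε * c := by
      rw [abs_mul, abs_of_pos (by positivity : (0:ℝ) < ε * c)]
      nlinarith [Real.abs_cos_le_one (c * x), mul_pos hεpos hcpos]
    linarith [h1, hεc, hgM]
  -- the orbit
  · set t : ℕ → ℝ := fun n => n + ((n : ℝ) ^ 2 - n) / (2 * M) with ht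
    set v : ℕ → ℝ := fun n => g / 2 * (1 + n / M) with hv
    -- key integrality
    have hev : ∀ n : ℕ, ∃ e : ℕ, n * (n - 1) = 2 * e := by
      intro n
      cases n with
      | zero => exact ⟨0, rfl⟩
      | succ k =>
        obtain ⟨e, he⟩ := Nat.even_mul_succ_self k
        exact ⟨e, by rw [Nat.succ_sub_one, Nat.mul_comm, he]; omega⟩
    have hMt : ∀ n : ℕ, ∃ m : ℕ, (M : ℝ) * t n = (m : ℝ) := by
      intro n
      obtain ⟨e, he⟩ := hev n
      refine ⟨M * n + e, ?_⟩
      have hn2 : ((n : ℝ) ^ 2 - n) = 2 * e := by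
        have : (n : ℝ) * ((n : ℝ) - 1) = ((n * (n - 1) : ℕ) : ℝ) := by
          cases n with
          | zero => simp
          | succ k => push_cast [Nat.succ_sub_one]; ring
        rw [he] at this
        push_cast at this ⊢
        nlinarith [this]
      rw [ht]
      push_cast
      rw [hn2]
      field_simp
    have hkey : ∀ n : ℕ, ∃ m : ℕ, c * t n = (m : ℝ) * (2 * π) := by
      intro n
      obtain ⟨m, hm⟩ := hMt n
      refine ⟨m, ?_⟩
      calc c * t n = ((M : ℝ) * t n) * (2 * π) := by rw [hc]; ring
        _ = (m : ℝ) * (2 * π) := by rw [hm]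
    have hsin : ∀ n : ℕ, Real.sin (c * t n) = 0 := by
      intro n
      obtain ⟨m, hm⟩ := hkey n
      rw [hm, show ((m : ℕ) : ℝ) * (2 * π) = ((2 * (m : ℤ) : ℤ) : ℝ) * π by push_cast; ring]
      exact Real.sin_int_mul_pi (2 * (m : ℤ))
    have hcos : ∀ n : ℕ, Real.cos (c * t n) = 1 := by
      intro n
      obtain ⟨m, hm⟩ := hkey n
      rw [hm, show ((m : ℕ) : ℝ) * (2 * π) = (((m : ℤ) : ℤ) : ℝ) * (2 * π) by push_cast; ring]
      exact Real.cos_int_mul_two_pi (m : ℤ)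
    have hf0 : ∀ n : ℕ, ε * Real.sin (c * t n) = 0 := fun n => by rw [hsin n]; ring
    have hstep : ∀ n : ℕ, t (n + 1) - t n = 1 + n / M := by
      intro n; rw [ht]; push_cast; field_simp; ring
    have hmono : ∀ n : ℕ, t n < t (n + 1) := by
      intro n
      have h := hstep n
      have hpos : (0:ℝ) < 1 + n / M := by positivity
      rw [← h] at hpos
      exact sub_pos.mp hpos
    refine ⟨t, v, M, 1, by omega, one_pos, hmono, ?_, ?_, ?_, ?_, ?_⟩
    · intro n
      have h1 : 2 / g * v n = 1 + n / M := by
        rw [hv]; field_simp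
      have h2 := hstep n
      simp only [hsin, mul_zero, sub_zero, sub_self, zero_div]
      rw [h1]
      linarith [h2]
    · intro n
      have hvstep : v (n + 1) - v n = g / (2 * M) := by
        rw [hv]; push_cast; field_simp; ring
      simp only [hsin, mul_zero, sub_self, zero_div, hderiv, hcos, mul_one, hεc]
      have h4 : 2 * (g / (4 * M)) = g / (2 * M) := by
        field_simp; ring
      linarith [hvstep, h4]
    · intro n
      refine ⟨n + 3 * K + 1, ?_⟩
      have hM2 : (M : ℝ) = 2 * K + 1 := by rw [hMdef]; push_cast; ring
      have hK1 : (2 * (K : ℝ) + 1) ≠ 0 := by positivity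
      have : t (n + M) - t n = ((n : ℝ) + 3 * K + 1) := by
        rw [ht]
        push_cast
        field_simp
        linear_combination (3 * (M:ℝ)) * hM2
      push_cast
      linarith [this]
    · intro n
      rw [hv]; push_cast; field_simp; ring
    · rintro ⟨b, hb⟩
      obtain ⟨n, hn⟩ := exists_nat_gt (2 * M * b / g)
      have hvb : v n ≤ b := hb ⟨n, rfl⟩
      have : 2 * M * b / g < (n : ℝ) := hn
      rw [div_lt_iff₀ hg] at this
      have hvn : v n = g / 2 + g / (2 * M) * n := by
        rw [hv]; field_simp
      have hgn : b < g / (2 * M) * n := by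
        rw [div_mul_eq_mul_div, lt_div_iff₀ (by positivity : (0:ℝ) < 2 * M)]
        nlinarith
      linarith [hvn, hvb, hgn, hg]
end
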